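/- Gaussian integral over the exterior of the simplex in the positive octant: Let d ∈ ℕ, d ≥ 1, and σ, R > 0. Then ∫_{{w ∈ ℝ^d : w_i ≥ 0 ∀i, ∑_{i=1}^d w_i ≥ R}} (2πσ²)^{−d/2} exp( −(∑_{i=1}^d w_i − R)² / (2dσ²) ) dw = (1/(2 (2πσ²)^{d/2} (d−1)!)) ∑_{i=0}^{d−1} binom(d−1, i) R^{d−1−i} (σ√(2d))^{i+1} Γ((i+1)/2). -/

import Mathlib

open MeasureTheory
open scoped BigOperators
open Set
open scoped ENNReal


private lemma gaussian_moment (i : ℕ) {b : ℝ} (hb : 0 < b) :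
    ∫ t in Ioi (0:ℝ), t ^ i * Real.exp (-b * t ^ 2)
      = (1 / 2) * (1 / b) ^ (((i : ℝ) + 1) / 2) * Real.Gamma (((i : ℝ) + 1) / 2) := by
  have ha : (0:ℝ) < ((i : ℝ) + 1) / 2 := by positivity
  have h1 := integral_comp_rpow_Ioi_of_pos
    (g := fun y => y ^ (((i : ℝ) + 1) / 2 - 1) * Real.exp (-(b * y))) (two_pos (α := ℝ))
  have h2 : EqOn (fun x : ℝ => ((2:ℝ) * x ^ ((2:ℝ) - 1)) •
      ((x ^ (2:ℝ)) ^ (((i : ℝ) + 1) / 2 - 1) * Real.exp (-(b * x ^ (2:ℝ)))))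
      (fun x : ℝ => 2 * (x ^ i * Real.exp (-b * x ^ 2))) (Ioi 0) := by
    intro x hx
    have hx0 : (0:ℝ) < x := hx
    have e1 : x ^ (2:ℝ) = x ^ 2 := by
      rw [show (2:ℝ) = ((2:ℕ):ℝ) by norm_num, Real.rpow_natCast]
    have e2 : (x ^ (2:ℝ)) ^ (((i : ℝ) + 1) / 2 - 1) = x ^ ((i:ℝ) - 1) := by
      rw [← Real.rpow_mul hx0.le, show (2:ℝ) * (((i : ℝ) + 1) / 2 - 1) = (i:ℝ) - 1 by ring]
    have e3 : x * x ^ ((i:ℝ) - 1) = x ^ i := by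
      nth_rewrite 1 [← Real.rpow_one x]
      rw [← Real.rpow_add hx0, show (1:ℝ) + ((i:ℝ) - 1) = (i:ℝ) by ring, Real.rpow_natCast]
    simp only [smul_eq_mul, e2]
    rw [show (2:ℝ) - 1 = 1 by norm_num, Real.rpow_one, e1]
    calc 2 * x * (x ^ ((i:ℝ) - 1) * Real.exp (-(b * x ^ 2)))
        = 2 * ((x * x ^ ((i:ℝ) - 1)) * Real.exp (-(b * x ^ 2))) := by ring
      _ = 2 * (x ^ i * Real.exp (-b * x ^ 2)) := by rw [e3, neg_mul]
  rw [setIntegral_congr_fun measurableSet_Ioi h2, MeasureTheory.integral_const_mul] at h1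
  rw [Real.integral_rpow_mul_exp_neg_mul_Ioi ha hb] at h1
  linarith [h1]


private lemma conv_step (d : ℕ) (f : ℝ → ℝ≥0∞) (hf : Measurable f) :
    ∫⁻ x in Ioi (0:ℝ), ∫⁻ s in Ioi (0:ℝ),
        ENNReal.ofReal (s ^ d / d.factorial) * f (x + s)
      = ∫⁻ u in Ioi (0:ℝ), ENNReal.ofReal (u ^ (d + 1) / (d + 1).factorial) * f u := by
  set K : ℝ × ℝ → ℝ≥0∞ := fun p =>
    ({q : ℝ × ℝ | 0 < q.1 ∧ q.1 < q.2}).indicator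
      (fun q => ENNReal.ofReal ((q.2 - q.1) ^ d / d.factorial) * f q.2) p with hK
  have hSmeas : MeasurableSet {q : ℝ × ℝ | 0 < q.1 ∧ q.1 < q.2} :=
    (measurableSet_lt measurable_const measurable_fst).inter
      (measurableSet_lt measurable_fst measurable_snd)
  have hKmeas : Measurable K := by
    apply Measurable.indicator _ hSmeas
    exact ((measurable_snd.sub measurable_fst).pow_const d |>.div_const _
      |>.ennreal_ofReal).mul (hf.comp measurable_snd)
  -- Step 1: LHS = double full-space lintegral of K
  have L1 : ∫⁻ x in Ioi (0:ℝ), ∫⁻ s in Ioi (0:ℝ),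
      ENNReal.ofReal (s ^ d / d.factorial) * f (x + s)
      = ∫⁻ x, ∫⁻ u, K (x, u) := by
    rw [← lintegral_indicator measurableSet_Ioi]
    refine lintegral_congr fun x => ?_
    by_cases hx : (0:ℝ) < x
    · rw [Set.indicator_of_mem (mem_Ioi.2 hx)]
      have shift := (measurePreserving_add_left volume x).setLIntegral_comp_preimage_emb
        (MeasurableEquiv.addLeft x).measurableEmbedding
        (fun u => ENNReal.ofReal ((u - x) ^ d / d.factorial) * f u) (Ioi x)
      have hpre : (fun s => x + s) ⁻¹' Ioi x = Ioi (0:ℝ) := by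
        ext s; simp [lt_add_iff_pos_right]
      calc ∫⁻ s in Ioi (0:ℝ), ENNReal.ofReal (s ^ d / d.factorial) * f (x + s)
          = ∫⁻ s in Ioi (0:ℝ),
            ENNReal.ofReal ((x + s - x) ^ d / d.factorial) * f (x + s) := by
            refine lintegral_congr fun s => ?_; rw [add_sub_cancel_left]
        _ = ∫⁻ u in Ioi x, ENNReal.ofReal ((u - x) ^ d / d.factorial) * f u := by
            rw [hpre] at shift
            exact shift
        _ = ∫⁻ u, K (x, u) := by
            rw [← lintegral_indicator measurableSet_Ioi]
            refine lintegral_congr fun u => ?_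
            simp only [hK, Set.indicator_apply, mem_Ioi, mem_setOf_eq, hx, true_and]
    · rw [Set.indicator_of_notMem (by simpa using hx)]
      symm
      have : ∀ u, K (x, u) = 0 := by
        intro u; simp only [hK, Set.indicator_apply, mem_setOf_eq, hx, false_and, if_false]
      simp [this]
  rw [L1, lintegral_lintegral_swap hKmeas.aemeasurable]
  -- Step 2: inner x-integral computes the beta-like kernel
  rw [← lintegral_indicator measurableSet_Ioi]
  refine lintegral_congr fun u => ?_
  have hKx : ∀ x, K (x, u) =
      (Ioo (0:ℝ) u).indicator (fun x => ENNReal.ofReal ((u - x) ^ d / d.factorial) * f u) x := by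
    intro x; simp only [hK, Set.indicator_apply, mem_setOf_eq, mem_Ioo]
  simp only [hKx]
  rw [lintegral_indicator measurableSet_Ioo,
    lintegral_mul_const (f := fun x => ENNReal.ofReal ((u - x) ^ d / d.factorial)) _ (by fun_prop)]
  by_cases hu : (0:ℝ) < u
  · rw [Set.indicator_of_mem (mem_Ioi.2 hu)]
    congr 1
    have hcont : Continuous fun x : ℝ => (u - x) ^ d / (d.factorial : ℝ) :=
      ((continuous_const.sub continuous_id).pow d).div_const _
    have hint : IntegrableOn (fun x : ℝ => (u - x) ^ d / (d.factorial : ℝ)) (Ioo 0 u) :=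
      (hcont.integrableOn_Icc).mono_set Ioo_subset_Icc_self
    have hnn : 0 ≤ᵐ[volume.restrict (Ioo (0:ℝ) u)]
        fun x : ℝ => (u - x) ^ d / (d.factorial : ℝ) := by
      filter_upwards [ae_restrict_mem measurableSet_Ioo] with x hx
      have : (0:ℝ) ≤ u - x := by linarith [hx.2]
      positivity
    rw [← ofReal_integral_eq_lintegral_ofReal hint hnn]
    congr 1
    rw [← integral_Ioc_eq_integral_Ioo, ← intervalIntegral.integral_of_le hu.le]
    have : ∫ x in (0:ℝ)..u, (u - x) ^ d / (d.factorial : ℝ)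
        = (∫ x in (0:ℝ)..u, (u - x) ^ d) / (d.factorial : ℝ) := by
      rw [intervalIntegral.integral_div]
    rw [this, intervalIntegral.integral_comp_sub_left (fun x => x ^ d) u, sub_self, sub_zero,
      integral_pow, Nat.factorial_succ]
    push_cast
    field_simp
    simp
  · rw [Set.indicator_of_notMem (by simpa using hu), Ioo_eq_empty (by simpa using hu)]
    simp


private lemma octant_lintegral :
    ∀ (d : ℕ) (f : ℝ → ℝ≥0∞), Measurable f →
      ∫⁻ w in {w : Fin (d + 1) → ℝ | ∀ i, 0 ≤ w i}, f (∑ i, w i)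
        = ∫⁻ s in Ioi (0:ℝ), ENNReal.ofReal (s ^ d / d.factorial) * f s := by
  intro d
  induction d with
  | zero =>
    intro f hf
    have mp : MeasurePreserving (MeasurableEquiv.funUnique (Fin 1) ℝ).symm :=
      (volume_preserving_funUnique (Fin 1) ℝ).symm _
    have key := mp.setLIntegral_comp_preimage_emb
      (MeasurableEquiv.funUnique (Fin 1) ℝ).symm.measurableEmbedding
      (fun w => f (∑ i, w i)) {w : Fin 1 → ℝ | ∀ i, 0 ≤ w i}
    have hpre : (MeasurableEquiv.funUnique (Fin 1) ℝ).symm ⁻¹'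
        {w : Fin 1 → ℝ | ∀ i, 0 ≤ w i} = Ici (0:ℝ) := by
      ext x
      simp [MeasurableEquiv.funUnique, Equiv.funUnique]
    have hsum : ∀ x : ℝ, (∑ i, (MeasurableEquiv.funUnique (Fin 1) ℝ).symm x i) = x := by
      intro x
      simp [MeasurableEquiv.funUnique, Equiv.funUnique, Fin.sum_univ_one]
    rw [hpre] at key
    simp only [hsum] at key
    rw [← key, ← Measure.restrict_congr_set Ioi_ae_eq_Ici]
    refine lintegral_congr fun s => ?_
    simp [Nat.factorial]
  | succ d ih =>
    intro f hf
    have mp : MeasurePreserving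
        (MeasurableEquiv.piFinSuccAbove (fun _ : Fin (d + 2) => ℝ) 0).symm :=
      (volume_preserving_piFinSuccAbove (fun _ : Fin (d + 2) => ℝ) 0).symm _
    have key := mp.setLIntegral_comp_preimage_emb
      (MeasurableEquiv.piFinSuccAbove (fun _ : Fin (d + 2) => ℝ) 0).symm.measurableEmbedding
      (fun w => f (∑ i, w i)) {w : Fin (d + 2) → ℝ | ∀ i, 0 ≤ w i}
    have hpre : (MeasurableEquiv.piFinSuccAbove (fun _ : Fin (d + 2) => ℝ) 0).symm ⁻¹'
        {w : Fin (d + 2) → ℝ | ∀ i, 0 ≤ w i}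
        = (Ici (0:ℝ)) ×ˢ {y : Fin (d + 1) → ℝ | ∀ i, 0 ≤ y i} := by
      ext p
      simp only [mem_preimage, MeasurableEquiv.piFinSuccAbove_symm_apply, mem_setOf_eq,
        mem_prod, mem_Ici]
      rw [Fin.forall_iff_succAbove (0 : Fin (d + 2))]
      simp [Fin.insertNth_apply_same, Fin.insertNth_apply_succAbove]
    have hsum : ∀ p : ℝ × (Fin (d + 1) → ℝ),
        (∑ i, (MeasurableEquiv.piFinSuccAbove (fun _ : Fin (d + 2) => ℝ) 0).symm p i)
          = p.1 + ∑ i, p.2 i := by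
      intro p
      simp only [MeasurableEquiv.piFinSuccAbove_symm_apply]
      rw [Fin.sum_univ_succAbove _ (0 : Fin (d + 2))]
      simp [Fin.insertNth_apply_same, Fin.insertNth_apply_succAbove]
    rw [hpre] at key
    simp only [hsum] at key
    rw [← key]
    have hprod : (volume : Measure (ℝ × (Fin (d + 1) → ℝ))).restrict
        ((Ici (0:ℝ)) ×ˢ {y : Fin (d + 1) → ℝ | ∀ i, 0 ≤ y i})
        = (volume.restrict (Ici (0:ℝ))).prod
            (volume.restrict {y : Fin (d + 1) → ℝ | ∀ i, 0 ≤ y i}) := by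
      rw [Measure.volume_eq_prod, Measure.prod_restrict]
    rw [hprod]
    have hmeas : Measurable fun p : ℝ × (Fin (d + 1) → ℝ) => f (p.1 + ∑ i, p.2 i) :=
      hf.comp (measurable_fst.add
        (Finset.measurable_sum _ fun i _ => (measurable_pi_apply i).comp measurable_snd))
    rw [lintegral_prod _ hmeas.aemeasurable]
    have hinner : ∀ x : ℝ,
        ∫⁻ y in {y : Fin (d + 1) → ℝ | ∀ i, 0 ≤ y i}, f (x + ∑ i, y i)
          = ∫⁻ s in Ioi (0:ℝ), ENNReal.ofReal (s ^ d / d.factorial) * f (x + s) := by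
      intro x
      exact ih (fun s => f (x + s)) (hf.comp (measurable_const_add x))
    simp only [hinner]
    rw [Measure.restrict_congr_set (Ioi_ae_eq_Ici (a := (0:ℝ))).symm]
    exact conv_step d f hf



/-- Gaussian integral over the exterior of the simplex in the positive octant:
`∫_{w ≥ 0, ∑ w_i ≥ R} (2πσ²)^{-d/2} exp(-(∑ w_i - R)²/(2dσ²)) dw
  = (1/(2 (2πσ²)^{d/2} (d-1)!)) ∑_{i=0}^{d-1} C(d-1,i) R^{d-1-i} (σ√(2d))^{i+1} Γ((i+1)/2)`. -/
theorem gaussian_exterior_simplex_integral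
    (d : ℕ) (hd : 1 ≤ d) (σ R : ℝ) (hσ : 0 < σ) (hR : 0 < R) :
    (∫ w in {w : Fin d → ℝ | (∀ i, 0 ≤ w i) ∧ R ≤ ∑ i, w i},
        (2 * Real.pi * σ ^ 2) ^ (-(d : ℝ) / 2) *
          Real.exp (-((∑ i, w i) - R) ^ 2 / (2 * d * σ ^ 2)))
    = (1 / (2 * (2 * Real.pi * σ ^ 2) ^ ((d : ℝ) / 2) * ((d - 1).factorial : ℝ))) *
        ∑ i ∈ Finset.range d,
          ((d - 1).choose i : ℝ) * R ^ (d - 1 - i) *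
            (σ * Real.sqrt (2 * d)) ^ (i + 1) * Real.Gamma (((i : ℝ) + 1) / 2) := by
  obtain ⟨n, rfl⟩ : ∃ n, d = n + 1 := ⟨d - 1, (Nat.succ_pred_eq_of_pos hd).symm⟩
  simp only [Nat.add_sub_cancel]
  set c : ℝ := 2 * ((n + 1 : ℕ) : ℝ) * σ ^ 2 with hc_def
  have hc : 0 < c := by positivity
  set C : ℝ := (2 * Real.pi * σ ^ 2) ^ (-((n + 1 : ℕ) : ℝ) / 2) with hC_def
  have hC : 0 < C := by
    apply Real.rpow_pos_of_pos
    positivity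
  set g : ℝ → ℝ := fun s => C * Real.exp (-(s - R) ^ 2 / c) with hg_def
  have hg_cont : Continuous g := by fun_prop
  have hg_nn : ∀ s, 0 ≤ g s := fun s => by positivity
  set f : ℝ → ℝ≥0∞ := fun s => (Ici R).indicator (fun s => ENNReal.ofReal (g s)) s with hf_def
  have hf : Measurable f :=
    ((ENNReal.measurable_ofReal.comp hg_cont.measurable)).indicator measurableSet_Ici
  have hsum_meas : Measurable fun w : Fin (n + 1) → ℝ => ∑ i, w i :=
    Finset.measurable_sum _ fun i _ => measurable_pi_apply i
  -- Step 1: integral to lintegral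
  have M1 : (∫ w in {w : Fin (n + 1) → ℝ | (∀ i, 0 ≤ w i) ∧ R ≤ ∑ i, w i},
        g (∑ i, w i))
      = (∫⁻ w in {w : Fin (n + 1) → ℝ | (∀ i, 0 ≤ w i) ∧ R ≤ ∑ i, w i},
          ENNReal.ofReal (g (∑ i, w i))).toReal :=
    integral_eq_lintegral_of_nonneg_ae (ae_of_all _ fun w => hg_nn _)
      ((hg_cont.comp (continuous_finset_sum _ fun i _ =>
        continuous_apply i)).aestronglyMeasurable)
  -- Step 2: restrict set manipulation
  have hsetT : MeasurableSet {w : Fin (n + 1) → ℝ | R ≤ ∑ i, w i} :=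
    measurableSet_le measurable_const hsum_meas
  have M2 : (∫⁻ w in {w : Fin (n + 1) → ℝ | (∀ i, 0 ≤ w i) ∧ R ≤ ∑ i, w i},
        ENNReal.ofReal (g (∑ i, w i)))
      = ∫⁻ w in {w : Fin (n + 1) → ℝ | ∀ i, 0 ≤ w i}, f (∑ i, w i) := by
    have : ∀ w : Fin (n + 1) → ℝ, f (∑ i, w i)
        = ({w : Fin (n + 1) → ℝ | R ≤ ∑ i, w i}).indicator
            (fun w => ENNReal.ofReal (g (∑ i, w i))) w := by
      intro w
      simp only [hf_def, Set.indicator_apply, mem_Ici, mem_setOf_eq]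
    have hset : {w : Fin (n + 1) → ℝ | (∀ i, 0 ≤ w i) ∧ R ≤ ∑ i, w i}
        = {w : Fin (n + 1) → ℝ | R ≤ ∑ i, w i} ∩ {w : Fin (n + 1) → ℝ | ∀ i, 0 ≤ w i} := by
      ext w
      simp only [mem_inter_iff, mem_setOf_eq]
      tauto
    rw [hset, ← Measure.restrict_restrict hsetT, ← lintegral_indicator hsetT]
    exact lintegral_congr fun w => (this w).symm
  -- Step 3: dimension reduction
  have M3 := octant_lintegral n f hf
  -- Step 4: identify with integral over Ioi R
  have M4 : (∫⁻ s in Ioi (0:ℝ), ENNReal.ofReal (s ^ n / n.factorial) * f s)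
      = ∫⁻ s in Ioi R, ENNReal.ofReal (s ^ n / n.factorial * g s) := by
    have h1 : ∀ s : ℝ, ENNReal.ofReal (s ^ n / n.factorial) * f s
        = (Ici R).indicator
            (fun s => ENNReal.ofReal (s ^ n / n.factorial) * ENNReal.ofReal (g s)) s := by
      intro s
      by_cases hs : s ∈ Ici R
      · simp [hf_def, Set.indicator_of_mem hs]
      · simp [hf_def, Set.indicator_of_notMem hs]
    simp only [h1]
    rw [lintegral_indicator measurableSet_Ici, Measure.restrict_restrict measurableSet_Ici]
    have : Ici R ∩ Ioi (0:ℝ) = Ici R :=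
      inter_eq_self_of_subset_left fun x hx => lt_of_lt_of_le hR hx
    rw [this, ← Measure.restrict_congr_set Ioi_ae_eq_Ici]
    refine setLIntegral_congr_fun measurableSet_Ioi (fun s hs => ?_)
    rw [← ENNReal.ofReal_mul]
    have : (0:ℝ) < s := lt_trans hR hs
    positivity
  -- Step 5: back to a real integral
  have M5 : (∫⁻ s in Ioi R, ENNReal.ofReal (s ^ n / n.factorial * g s)).toReal
      = ∫ s in Ioi R, s ^ n / n.factorial * g s := by
    rw [integral_eq_lintegral_of_nonneg_ae (f := fun s => s ^ n / (n.factorial : ℝ) * g s)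
      ((ae_restrict_mem measurableSet_Ioi).mono fun s hs => by
        have : (0:ℝ) < s := lt_trans hR hs
        positivity)
      ((((continuous_pow n).div_const _).mul hg_cont).aestronglyMeasurable)]
  -- Step 6: the 1-d computation
  have M6 : (∫ s in Ioi R, s ^ n / n.factorial * g s)
      = (1 / (2 * (2 * Real.pi * σ ^ 2) ^ (((n + 1 : ℕ) : ℝ) / 2) * (n.factorial : ℝ))) *
        ∑ i ∈ Finset.range (n + 1),
          ((n.choose i : ℝ) * R ^ (n - i) *
            (σ * Real.sqrt (2 * ((n + 1 : ℕ) : ℝ))) ^ (i + 1) *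
              Real.Gamma (((i : ℝ) + 1) / 2)) := by
    have hb : (0:ℝ) < 1 / c := by positivity
    -- shift the integral
    have hmap : Measure.map (fun t : ℝ => R + t) volume = volume :=
      (measurePreserving_add_left volume R).map_eq
    have hpre : (fun t : ℝ => R + t) ⁻¹' Ioi R = Ioi (0:ℝ) := by
      ext t; simp [lt_add_iff_pos_right]
    have shift : (∫ s in Ioi R, s ^ n / n.factorial * g s)
        = ∫ t in Ioi (0:ℝ), (R + t) ^ n / n.factorial * g (R + t) := by
      have coee : (⇑(MeasurableEquiv.addLeft R) : ℝ → ℝ) = fun t => R + t := rfl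
      conv_lhs => rw [← hmap]
      rw [← coee]
      rw [(MeasurableEquiv.addLeft R).measurableEmbedding.setIntegral_map
        (fun s => s ^ n / (n.factorial : ℝ) * g s) (Ioi R)]
      simp only [coee]
      rw [hpre]
    rw [shift]
    have hgRt : ∀ t : ℝ, g (R + t) = C * Real.exp (-(1 / c) * t ^ 2) := by
      intro t
      simp only [hg_def, add_sub_cancel_left]
      rw [show -t ^ 2 / c = -(1 / c) * t ^ 2 by ring]
    -- binomial expansion
    have hint : ∀ i ∈ Finset.range (n + 1),
        IntegrableOn (fun t : ℝ => (R ^ (n - i) * (n.choose i : ℝ) / n.factorial * C)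
          * (t ^ i * Real.exp (-(1 / c) * t ^ 2))) (Ioi (0:ℝ)) := by
      intro i _
      have h := integrableOn_rpow_mul_exp_neg_mul_sq hb
        (s := (i : ℝ)) (lt_of_lt_of_le (by norm_num) (Nat.cast_nonneg i))
      have h2 : IntegrableOn (fun t : ℝ => t ^ i * Real.exp (-(1 / c) * t ^ 2)) (Ioi 0) := by
        simpa [Real.rpow_natCast] using h
      exact h2.const_mul _
    have heq : EqOn (fun t : ℝ => (R + t) ^ n / n.factorial * g (R + t))
        (fun t : ℝ => ∑ i ∈ Finset.range (n + 1),
          (R ^ (n - i) * (n.choose i : ℝ) / n.factorial * C)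
            * (t ^ i * Real.exp (-(1 / c) * t ^ 2))) (Ioi 0) := by
      intro t _
      simp only [hgRt t]
      rw [add_comm R t, add_pow, Finset.sum_div, Finset.sum_mul]
      refine Finset.sum_congr rfl fun i _ => ?_
      ring
    rw [setIntegral_congr_fun measurableSet_Ioi heq, integral_finset_sum _ hint]
    -- evaluate each term
    have key_pow : ∀ i : ℕ, c ^ (((i : ℝ) + 1) / 2)
        = (σ * Real.sqrt (2 * ((n + 1 : ℕ) : ℝ))) ^ (i + 1) := by
      intro i
      have hK : (0:ℝ) < σ * Real.sqrt (2 * ((n + 1 : ℕ) : ℝ)) :=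
        mul_pos hσ (Real.sqrt_pos.2 (by positivity))
      have hK2 : (σ * Real.sqrt (2 * ((n + 1 : ℕ) : ℝ))) ^ 2 = c := by
        rw [mul_pow, Real.sq_sqrt (by positivity)]
        rw [hc_def]; ring
      rw [← hK2, ← Real.rpow_natCast (σ * Real.sqrt (2 * ((n + 1 : ℕ) : ℝ))) 2,
        ← Real.rpow_mul hK.le,
        show ((2:ℕ):ℝ) * (((i : ℝ) + 1) / 2) = ((i + 1 : ℕ) : ℝ) by push_cast; ring,
        Real.rpow_natCast]
    have hCP : C = ((2 * Real.pi * σ ^ 2) ^ (((n + 1 : ℕ) : ℝ) / 2))⁻¹ := by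
      rw [hC_def, neg_div, Real.rpow_neg (by positivity)]
    have hP : (0:ℝ) < (2 * Real.pi * σ ^ 2) ^ (((n + 1 : ℕ) : ℝ) / 2) :=
      Real.rpow_pos_of_pos (by positivity) _
    rw [Finset.mul_sum]
    refine Finset.sum_congr rfl fun i _ => ?_
    rw [MeasureTheory.integral_const_mul, gaussian_moment i hb, one_div_one_div, key_pow i, hCP]
    have hfac : (0:ℝ) < (n.factorial : ℝ) := by exact_mod_cast n.factorial_pos
    field_simp
  have final : (∫ w in {w : Fin (n + 1) → ℝ | (∀ i, 0 ≤ w i) ∧ R ≤ ∑ i, w i},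
      g (∑ i, w i))
      = (1 / (2 * (2 * Real.pi * σ ^ 2) ^ (((n + 1 : ℕ) : ℝ) / 2) * (n.factorial : ℝ))) *
        ∑ i ∈ Finset.range (n + 1),
          ((n.choose i : ℝ) * R ^ (n - i) *
            (σ * Real.sqrt (2 * ((n + 1 : ℕ) : ℝ))) ^ (i + 1) *
              Real.Gamma (((i : ℝ) + 1) / 2)) := by
    rw [M1, M2, M3, M4, M5, M6]
  exact final
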